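/- Let n ≥ 3 and let Ω ⊂ ℝ^n be an open neighborhood of the origin. Suppose w is a nonnegative C² function on Ω ∖ {0} satisfying Δw ≤ 0 on Ω ∖ {0}. Then liminf_{r → 0⁺} ( r^{n−2} · min_{|x| = r} w(x) ) < +∞. -/

import Mathlib

/-- Partial derivative `∂_i f` of a function on `ℝ^n`. -/
noncomputable def pder (n : ℕ) (f : (Fin n → ℝ) → ℝ) (i : Fin n) : (Fin n → ℝ) → ℝ :=
  fun x => fderiv ℝ f x (Pi.single i 1)

/-- Laplacian `Δf(x) = Σ_i ∂_i∂_i f(x)`. -/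
noncomputable def lap (n : ℕ) (f : (Fin n → ℝ) → ℝ) (x : Fin n → ℝ) : ℝ :=
  ∑ i : Fin n, pder n (pder n f i) i x

/-- The Euclidean sphere of radius `r` about the origin in `ℝ^n`. -/
def eucSphere (n : ℕ) (r : ℝ) : Set (Fin n → ℝ) :=
  {x | Real.sqrt (∑ i : Fin n, x i ^ 2) = r}

namespace SHAux

variable {n : ℕ}

def qf (n : ℕ) : (Fin n → ℝ) → ℝ := fun x => ∑ i, x i ^ 2

lemma qf_nonneg (x : Fin n → ℝ) : 0 ≤ qf n x := Finset.sum_nonneg fun i _ => sq_nonneg _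

lemma qf_pos {x : Fin n → ℝ} (hx : x ≠ 0) : 0 < qf n x := by
  rcases (qf_nonneg x).lt_or_eq with h | h
  · exact h
  · exfalso
    apply hx
    funext i
    have h2 := (Finset.sum_eq_zero_iff_of_nonneg
      (fun i _ => sq_nonneg (x i))).1 h.symm i (Finset.mem_univ i)
    have := pow_eq_zero_iff (n := 2) (by norm_num) |>.1 h2
    simpa using this

lemma contDiff_qf : ContDiff ℝ 2 (qf n) :=
  ContDiff.sum fun i _ => (ContinuousLinearMap.proj (R := ℝ) (φ := fun _ : Fin n => ℝ) i).contDiff.pow 2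

lemma continuous_qf : Continuous (qf n) := contDiff_qf.continuous

noncomputable def Dq (x : Fin n → ℝ) : (Fin n → ℝ) →L[ℝ] ℝ :=
  ∑ i, (2 * x i) • ContinuousLinearMap.proj (R := ℝ) (φ := fun _ : Fin n => ℝ) i

lemma Dq_apply (x : Fin n → ℝ) (i : Fin n) : Dq x (Pi.single i 1) = 2 * x i := by
  simp [Dq, ContinuousLinearMap.sum_apply, Pi.single_apply]

lemma hasFDerivAt_qf (x : Fin n → ℝ) : HasFDerivAt (qf n) (Dq x) x := by
  apply HasFDerivAt.fun_sum
  intro i _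
  have h := ((ContinuousLinearMap.proj (R := ℝ) (φ := fun _ : Fin n => ℝ) i).hasFDerivAt
      (x := x)).mul ((ContinuousLinearMap.proj (R := ℝ) (φ := fun _ : Fin n => ℝ) i).hasFDerivAt (x := x))
  have e1 : (fun y : Fin n → ℝ => y i ^ 2) = fun y => y i * y i := by funext y; ring
  have e2 : ((2 : ℝ) * x i) • ContinuousLinearMap.proj (R := ℝ) (φ := fun _ : Fin n => ℝ) i
      = x i • ContinuousLinearMap.proj (R := ℝ) (φ := fun _ : Fin n => ℝ) i
        + x i • ContinuousLinearMap.proj (R := ℝ) (φ := fun _ : Fin n => ℝ) i := by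
    rw [two_mul, add_smul]
  rw [e1, e2]
  exact h

lemma pder_qf (i : Fin n) : pder n (qf n) i = fun x => 2 * x i := by
  funext x
  unfold pder
  rw [(hasFDerivAt_qf x).fderiv, Dq_apply]

lemma lap_qf (x : Fin n → ℝ) : lap n (qf n) x = 2 * n := by
  unfold lap
  have h : ∀ i : Fin n, pder n (pder n (qf n) i) i x = 2 := by
    intro i
    rw [pder_qf]
    unfold pder
    have h : HasFDerivAt (fun x : Fin n → ℝ => 2 * x i)
        ((2:ℝ) • ContinuousLinearMap.proj (R := ℝ) (φ := fun _ : Fin n => ℝ) i) x :=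
      ((ContinuousLinearMap.proj (R := ℝ) (φ := fun _ : Fin n => ℝ) i).hasFDerivAt).const_mul 2
    rw [h.fderiv]
    simp
  rw [Finset.sum_congr rfl fun i _ => h i]
  simp [Finset.card_univ]
  ring

end SHAux

namespace SHAux2
open SHAux

variable {n : ℕ}

lemma hasFDerivAt_rpow_qf (p : ℝ) {x : Fin n → ℝ} (hx : x ≠ 0) :
    HasFDerivAt (fun y => qf n y ^ p) ((p * qf n x ^ (p - 1)) • Dq x) x :=
  (Real.hasDerivAt_rpow_const (Or.inl (qf_pos hx).ne')).comp_hasFDerivAt x (hasFDerivAt_qf x)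

lemma contDiffAt_rpow_qf (p : ℝ) {x : Fin n → ℝ} (hx : x ≠ 0) :
    ContDiffAt ℝ 2 (fun y => qf n y ^ p) x :=
  (Real.contDiffAt_rpow_const_of_ne (qf_pos hx).ne').comp x contDiff_qf.contDiffAt

lemma pder_rpow_qf (p : ℝ) (i : Fin n) {x : Fin n → ℝ} (hx : x ≠ 0) :
    pder n (fun y => qf n y ^ p) i x = p * qf n x ^ (p - 1) * (2 * x i) := by
  unfold pder
  rw [(hasFDerivAt_rpow_qf p hx).fderiv]
  simp [Dq_apply]

lemma hasFDerivAt_Pfun (p : ℝ) (i : Fin n) {x : Fin n → ℝ} (hx : x ≠ 0) :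
    HasFDerivAt (fun y => p * qf n y ^ (p - 1) * (2 * y i))
      ((p * qf n x ^ (p - 1)) • ((2:ℝ) • ContinuousLinearMap.proj (R := ℝ) (φ := fun _ : Fin n => ℝ) i)
        + (2 * x i) • (p • (((p - 1) * qf n x ^ (p - 1 - 1)) • Dq x))) x := by
  have hc : HasFDerivAt (fun y => p * qf n y ^ (p - 1))
      (p • (((p - 1) * qf n x ^ (p - 1 - 1)) • Dq x)) x :=
    (hasFDerivAt_rpow_qf (p - 1) hx).const_mul p
  have hd : HasFDerivAt (fun y : Fin n → ℝ => 2 * y i)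
      ((2:ℝ) • ContinuousLinearMap.proj (R := ℝ) (φ := fun _ : Fin n => ℝ) i) x :=
    ((ContinuousLinearMap.proj (R := ℝ) (φ := fun _ : Fin n => ℝ) i).hasFDerivAt).const_mul 2
  exact hc.mul hd

lemma pder_pder_rpow_qf (p : ℝ) (i : Fin n) {x : Fin n → ℝ} (hx : x ≠ 0) :
    pder n (pder n (fun y => qf n y ^ p) i) i x
      = 2 * p * qf n x ^ (p - 1) + 4 * p * (p - 1) * qf n x ^ (p - 1 - 1) * x i ^ 2 := by
  have hopen : IsOpen {y : Fin n → ℝ | y ≠ 0} := isOpen_compl_singleton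
  have hev : pder n (fun y => qf n y ^ p) i =ᶠ[nhds x] fun y => p * qf n y ^ (p - 1) * (2 * y i) := by
    filter_upwards [hopen.mem_nhds hx] with y hy
    exact pder_rpow_qf p i hy
  show fderiv ℝ (pder n (fun y => qf n y ^ p) i) x (Pi.single i 1) = _
  rw [hev.fderiv_eq, (hasFDerivAt_Pfun p i hx).fderiv]
  simp [Dq_apply]
  ring

lemma lap_rpow_qf (p : ℝ) {x : Fin n → ℝ} (hx : x ≠ 0) :
    lap n (fun y => qf n y ^ p) x = (2 * n * p + 4 * p * (p - 1)) * qf n x ^ (p - 1) := by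
  unfold lap
  rw [Finset.sum_congr rfl fun i _ => pder_pder_rpow_qf p i hx]
  rw [Finset.sum_add_distrib, Finset.sum_const, Finset.card_univ, Fintype.card_fin,
    ← Finset.mul_sum]
  have h2 : qf n x ^ (p - 1 - 1) * qf n x = qf n x ^ (p - 1) := by
    nth_rewrite 2 [← Real.rpow_one (qf n x)]
    rw [← Real.rpow_add (qf_pos hx)]
    ring_nf
  have : (∑ i : Fin n, x i ^ 2) = qf n x := rfl
  rw [this, nsmul_eq_mul]
  linear_combination (4 * p * (p - 1)) * h2

end SHAux2

namespace SHAux3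
open SHAux Filter

variable {n : ℕ}

lemma differentiableAt_pder {u : (Fin n → ℝ) → ℝ} {x : Fin n → ℝ}
    (hu : ContDiffAt ℝ 2 u x) (i : Fin n) :
    DifferentiableAt ℝ (pder n u i) x := by
  have h1 : ContDiffAt ℝ 1 (fderiv ℝ u) x := hu.fderiv_right (by norm_num)
  have h2 : DifferentiableAt ℝ (fderiv ℝ u) x := h1.differentiableAt one_ne_zero
  exact ((ContinuousLinearMap.apply ℝ ℝ (Pi.single i 1 : Fin n → ℝ)).differentiableAt).comp x h2

lemma pder_sub_const_mul {u g : (Fin n → ℝ) → ℝ} {U : Set (Fin n → ℝ)}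
    (hu : ∀ y ∈ U, ContDiffAt ℝ 2 u y) (hg : ∀ y ∈ U, ContDiffAt ℝ 2 g y) (c : ℝ) (i : Fin n)
    {y : Fin n → ℝ} (hy : y ∈ U) :
    pder n (fun z => u z - c * g z) i y = pder n u i y - c * pder n g i y := by
  unfold pder
  have du : DifferentiableAt ℝ u y := (hu y hy).differentiableAt (by norm_num)
  have dg : DifferentiableAt ℝ g y := (hg y hy).differentiableAt (by norm_num)
  rw [fderiv_fun_sub du (dg.const_mul c), fderiv_const_mul dg]
  simp

lemma lap_sub_const_mul {u g : (Fin n → ℝ) → ℝ} {U : Set (Fin n → ℝ)} (hU : IsOpen U)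
    {x : Fin n → ℝ} (hx : x ∈ U)
    (hu : ∀ y ∈ U, ContDiffAt ℝ 2 u y) (hg : ∀ y ∈ U, ContDiffAt ℝ 2 g y) (c : ℝ) :
    lap n (fun y => u y - c * g y) x = lap n u x - c * lap n g x := by
  unfold lap
  have key : ∀ i : Fin n, pder n (pder n (fun y => u y - c * g y) i) i x
      = pder n (pder n u i) i x - c * pder n (pder n g i) i x := by
    intro i
    have hev : pder n (fun z => u z - c * g z) i =ᶠ[nhds x]
        fun y => pder n u i y - c * pder n g i y :=
      Filter.eventuallyEq_of_mem (hU.mem_nhds hx) (fun y hy => pder_sub_const_mul hu hg c i hy)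
    have hdu := differentiableAt_pder (hu x hx) i
    have hdg := differentiableAt_pder (hg x hx) i
    show fderiv ℝ _ x _ = _
    rw [hev.fderiv_eq, fderiv_fun_sub hdu (hdg.const_mul c), fderiv_const_mul hdg]
    simp [pder]
  rw [Finset.sum_congr rfl fun i _ => key i, Finset.sum_sub_distrib, Finset.mul_sum]

lemma lap_add_const (v : (Fin n → ℝ) → ℝ) (c : ℝ) (x : Fin n → ℝ) :
    lap n (fun y => v y + c) x = lap n v x := by
  have h : pder n (fun y => v y + c) = pder n v := by
    funext i y
    unfold pder
    rw [fderiv_add_const]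
  unfold lap
  rw [h]

lemma deriv2_nonneg {g G : ℝ → ℝ} {D : ℝ} (hg : ∀ᶠ t in nhds (0:ℝ), HasDerivAt g (G t) t)
    (hG : HasDerivAt G D 0) (hmin : IsLocalMin g 0) : 0 ≤ D := by
  by_contra hD
  push_neg at hD
  have hg0 : HasDerivAt g (G 0) 0 := hg.self_of_nhds
  have hG0 : G 0 = 0 := by rw [← hg0.deriv]; exact hmin.deriv_eq_zero
  have hslope := hasDerivAt_iff_tendsto_slope.1 hG
  have hev1 : ∀ᶠ t in nhdsWithin (0:ℝ) {(0:ℝ)}ᶜ, slope G 0 t < D / 2 :=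
    hslope.eventually_lt_const (by linarith)
  have hev2 : ∀ᶠ t in nhdsWithin (0:ℝ) {(0:ℝ)}ᶜ, HasDerivAt g (G t) t :=
    hg.filter_mono nhdsWithin_le_nhds
  have hev3 : ∀ᶠ t in nhdsWithin (0:ℝ) {(0:ℝ)}ᶜ, g 0 ≤ g t :=
    hmin.filter_mono nhdsWithin_le_nhds
  have hall := (hev1.and (hev2.and hev3))
  rw [eventually_nhdsWithin_iff] at hall
  rw [Metric.eventually_nhds_iff] at hall
  obtain ⟨δ, hδpos, hδ⟩ := hall
  have hmem : ∀ s : ℝ, 0 < s → s < δ →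
      slope G 0 s < D / 2 ∧ HasDerivAt g (G s) s ∧ g 0 ≤ g s := by
    intro s hs1 hs2
    refine hδ ?_ ?_
    · rw [Real.dist_eq, sub_zero, abs_of_pos hs1]; exact hs2
    · simp [hs1.ne']
  have hneg : ∀ s ∈ Set.Ioo (0:ℝ) (δ/2), deriv g s < 0 := by
    intro s hs
    obtain ⟨h1, h2, _⟩ := hmem s hs.1 (by linarith [hs.2])
    have hsl : slope G 0 s = G s / s := by
      rw [slope_def_field, hG0, sub_zero, sub_zero]
    rw [hsl] at h1
    have hGs : G s < 0 := by
      have h3 := (div_lt_iff₀ hs.1).1 h1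
      have h4 : D / 2 * s < 0 := mul_neg_of_neg_of_pos (by linarith) hs.1
      linarith
    rw [h2.deriv]; exact hGs
  have hcont : ContinuousOn g (Set.Icc 0 (δ/2)) := by
    intro s hs
    rcases eq_or_ne s 0 with rfl | hs0
    · exact hg0.continuousAt.continuousWithinAt
    · have hs1 : 0 < s := lt_of_le_of_ne hs.1 (Ne.symm hs0)
      exact ((hmem s hs1 (by linarith [hs.2, hδpos])).2.1).continuousAt.continuousWithinAt
  have hanti := strictAntiOn_of_deriv_neg (convex_Icc 0 (δ/2)) hcont
    (by rw [interior_Icc]; exact hneg)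
  have h7 : g (δ/2) < g 0 :=
    hanti (Set.left_mem_Icc.2 (by linarith)) (Set.right_mem_Icc.2 (by linarith)) (by linarith)
  have h8 : g 0 ≤ g (δ/2) := (hmem (δ/2) (by linarith) (by linarith)).2.2
  linarith

end SHAux3

namespace SHAux4
open SHAux SHAux3 Filter

variable {n : ℕ}

lemma lap_nonneg_of_isLocalMin {u : (Fin n → ℝ) → ℝ} {x : Fin n → ℝ}
    (hu : ContDiffAt ℝ 2 u x) (hmin : IsLocalMin u x) : 0 ≤ lap n u x := by
  unfold lap
  apply Finset.sum_nonneg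
  intro i _
  set e : Fin n → ℝ := Pi.single i 1 with he
  set L : ℝ → (Fin n → ℝ) := fun t => x + t • e with hLdef
  have hLcont : Continuous L := by
    apply continuous_const.add
    exact continuous_id.smul continuous_const
  have hL0 : L 0 = x := by simp [hLdef]
  have hLd : ∀ t : ℝ, HasDerivAt L e t := by
    intro t
    have := ((hasDerivAt_id t).smul_const e).const_add x
    rw [one_smul] at this
    exact this
  have htend : Filter.Tendsto L (nhds 0) (nhds x) := by
    rw [← hL0]; exact hLcont.continuousAt
  have hdiff : ∀ᶠ y in nhds x, ContDiffAt ℝ 2 u y := hu.eventually (by norm_num)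
  have hgev : ∀ᶠ t in nhds (0:ℝ), HasDerivAt (fun s => u (L s)) (fderiv ℝ u (L t) e) t := by
    filter_upwards [htend.eventually hdiff] with t ht
    exact (ht.differentiableAt (by norm_num)).hasFDerivAt.comp_hasDerivAt t (hLd t)
  have hd : DifferentiableAt ℝ (pder n u i) x := differentiableAt_pder hu i
  have hfd : HasFDerivAt (pder n u i) (fderiv ℝ (pder n u i) x) (L 0) := by
    rw [hL0]; exact hd.hasFDerivAt
  have hGd : HasDerivAt (fun t => fderiv ℝ u (L t) e) (pder n (pder n u i) i x) 0 := by
    exact hfd.comp_hasDerivAt 0 (hLd 0)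
  have hgmin : IsLocalMin (fun t => u (L t)) 0 := by
    have h : ∀ᶠ t in nhds (0:ℝ), u x ≤ u (L t) := htend.eventually hmin
    have : u (L 0) = u x := by rw [hL0]
    unfold IsLocalMin IsMinFilter
    simpa [this] using h
  exact deriv2_nonneg hgev hGd hgmin

lemma weak_min (hn : 0 < n) {S U : Set (Fin n → ℝ)} (hS : IsCompact S) (hUopen : IsOpen U)
    (hUS : U ⊆ S) {u : (Fin n → ℝ) → ℝ} (hc : ContinuousOn u S)
    (hu2 : ∀ x ∈ U, ContDiffAt ℝ 2 u x) (hlap : ∀ x ∈ U, lap n u x ≤ 0)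
    (hbd : ∀ x ∈ S \ U, 0 ≤ u x) : ∀ x ∈ S, 0 ≤ u x := by
  intro x hx
  obtain ⟨z, hzS, hzmax⟩ := hS.exists_isMaxOn ⟨x, hx⟩ (continuous_qf.continuousOn)
  set M := qf n z with hM
  have hM0 : 0 ≤ M := le_trans (qf_nonneg x) (hzmax hx)
  have key : ∀ ε : ℝ, 0 < ε → -(ε * M) ≤ u x := by
    intro ε hε
    have hcε : ContinuousOn (fun y => u y - ε * qf n y) S :=
      hc.sub ((continuous_const.mul continuous_qf).continuousOn)
    obtain ⟨x₀, hx₀S, hmin⟩ := hS.exists_isMinOn ⟨x, hx⟩ hcε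
    have hx₀notU : x₀ ∉ U := by
      intro hx₀U
      have hloc : IsLocalMin (fun y => u y - ε * qf n y) x₀ :=
        hmin.isLocalMin (Filter.mem_of_superset (hUopen.mem_nhds hx₀U) hUS)
      have h1 : ContDiffAt ℝ 2 (fun y => u y - ε * qf n y) x₀ :=
        (hu2 x₀ hx₀U).sub (contDiffAt_const.mul contDiff_qf.contDiffAt)
      have h2 := lap_nonneg_of_isLocalMin h1 hloc
      have h3 : lap n (fun y => u y - ε * qf n y) x₀ = lap n u x₀ - ε * (2 * n) := by
        rw [lap_sub_const_mul hUopen hx₀U hu2 (fun y _ => contDiff_qf.contDiffAt) ε, lap_qf]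
      have h4 := hlap x₀ hx₀U
      rw [h3] at h2
      have hn' : (1:ℝ) ≤ n := by exact_mod_cast hn
      nlinarith
    have hq0 : qf n x₀ ≤ M := hzmax hx₀S
    have h5 : 0 ≤ u x₀ := hbd x₀ ⟨hx₀S, hx₀notU⟩
    have h6 : u x₀ - ε * qf n x₀ ≤ u x - ε * qf n x := hmin hx
    nlinarith [qf_nonneg x, qf_nonneg x₀]
  by_contra hneg
  push_neg at hneg
  have hc : (0:ℝ) < 2 * (M + 1) := by linarith
  have hε : 0 < -(u x) / (2 * (M + 1)) := div_pos (by linarith) hc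
  have hk := key _ hε
  have h9 : -(-(u x) / (2 * (M + 1)) * M) = u x * M / (2 * (M + 1)) := by ring
  rw [h9] at hk
  have h10 := (div_le_iff₀ hc).1 hk
  have h11 : u x * (M + 2) < 0 := mul_neg_of_neg_of_pos hneg (by linarith)
  nlinarith [h10, h11]
end SHAux4


open SHAux SHAux2 SHAux3 SHAux4

/-- If `w ≥ 0` is `C²` and superharmonic (`Δw ≤ 0`) on `Ω ∖ {0}`, where `Ω` is an open
neighborhood of the origin in `ℝ^n`, then `liminf_{r→0⁺} r^{n−2} · min_{|x|=r} w < +∞`: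
there is a constant `C` such that for every `ε > 0` some radius `0 < r < ε` satisfies
`r^{n−2} · min_{|x|=r} w ≤ C`. -/
theorem superharmonic_liminf_finite (n : ℕ) (hn : 3 ≤ n)
    (Ω : Set (Fin n → ℝ)) (hΩopen : IsOpen Ω) (h0 : (0 : Fin n → ℝ) ∈ Ω)
    (w : (Fin n → ℝ) → ℝ)
    (hw : ContDiffOn ℝ 2 w (Ω \ {0}))
    (hwnonneg : ∀ x ∈ Ω \ {0}, 0 ≤ w x)
    (hsuper : ∀ x ∈ Ω \ {0}, lap n w x ≤ 0) :
    ∃ C : ℝ, ∀ ε : ℝ, 0 < ε → ∃ r : ℝ, 0 < r ∧ r < ε ∧ eucSphere n r ⊆ Ω ∧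
      r ^ (n - 2) * sInf (w '' eucSphere n r) ≤ C := by
  classical
  haveI : NeZero n := ⟨by omega⟩
  set p : ℝ := (2 - (n:ℝ)) / 2 with hp
  have hncast : (3:ℝ) ≤ (n:ℝ) := by exact_mod_cast hn
  have hplt : p < 0 := by rw [hp]; linarith
  -- ball inside Ω
  obtain ⟨δ, hδpos, hδ⟩ := Metric.isOpen_iff.1 hΩopen 0 h0
  set r0 : ℝ := δ / 2 with hr0def
  have hr0 : 0 < r0 := by positivity
  have hsub : ∀ x : Fin n → ℝ, qf n x ≤ r0 ^ 2 → x ∈ Ω := by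
    intro x hx
    apply hδ
    rw [Metric.mem_ball, dist_zero_right]
    have h1 : ‖x‖ ≤ Real.sqrt (qf n x) := by
      rw [pi_norm_le_iff_of_nonneg (Real.sqrt_nonneg _)]
      intro i
      rw [Real.norm_eq_abs, ← Real.sqrt_sq_eq_abs]
      exact Real.sqrt_le_sqrt
        (Finset.single_le_sum (f := fun j => x j ^ 2) (fun j _ => sq_nonneg _) (Finset.mem_univ i))
    have h2 : Real.sqrt (qf n x) ≤ r0 := by
      calc Real.sqrt (qf n x) ≤ Real.sqrt (r0 ^ 2) := Real.sqrt_le_sqrt hx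
        _ = r0 := Real.sqrt_sq hr0.le
    have : r0 < δ := by rw [hr0def]; linarith
    linarith
  set sΩ : Set (Fin n → ℝ) := Ω \ {0} with hsΩ
  have hsΩopen : IsOpen sΩ := hΩopen.sdiff isClosed_singleton
  -- the observation point y0
  set y0 : Fin n → ℝ := (r0 / 2) • (Pi.single (0 : Fin n) (1:ℝ) : Fin n → ℝ) with hy0
  have hqy0 : qf n y0 = (r0 / 2) ^ 2 := by
    show (∑ i : Fin n, ((r0 / 2) • (Pi.single (0 : Fin n) (1:ℝ) : Fin n → ℝ)) i ^ 2) = (r0 / 2) ^ 2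
    have : ∀ i : Fin n, ((r0 / 2) • (Pi.single (0 : Fin n) (1:ℝ) : Fin n → ℝ)) i ^ 2
        = if i = 0 then (r0 / 2) ^ 2 else 0 := by
      intro i
      by_cases h : i = 0 <;> simp [h, Pi.single_apply]
    rw [Finset.sum_congr rfl fun i _ => this i, Finset.sum_ite_eq' Finset.univ (0 : Fin n)]
    simp
  have hy0ne : y0 ≠ 0 := by
    intro h
    have h2 : qf n y0 = 0 := by rw [h]; simp [qf]
    rw [hqy0] at h2
    nlinarith
  have hy0Ω : y0 ∈ sΩ := ⟨hsub y0 (by rw [hqy0]; nlinarith), hy0ne⟩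
  set K : ℝ := ((r0 / 2) ^ 2) ^ p - (r0 ^ 2) ^ p with hK
  have hKpos : 0 < K := by
    have h1 : ((r0 / 2):ℝ) ^ 2 < r0 ^ 2 := by nlinarith
    have := Real.rpow_lt_rpow_of_neg (by positivity : (0:ℝ) < (r0 / 2) ^ 2) h1 hplt
    rw [hK]; linarith
  refine ⟨max 0 (w y0 / K), ?_⟩
  intro ε hε
  set r : ℝ := min (ε / 2) (r0 / 4) with hrdef
  have hrpos : 0 < r := lt_min (by linarith) (by linarith)
  have hrε : r < ε := lt_of_le_of_lt (min_le_left _ _) (by linarith)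
  have hrr0 : r ≤ r0 / 4 := min_le_right _ _
  have hy0lb : r ^ 2 ≤ qf n y0 := by rw [hqy0]; nlinarith
  have hy0ub : qf n y0 ≤ r0 ^ 2 := by rw [hqy0]; nlinarith
  have hr2pos : (0:ℝ) < r ^ 2 := by positivity
  have hr2lt : r ^ 2 < r0 ^ 2 := by nlinarith
  have hsphere_q : ∀ x, x ∈ eucSphere n r ↔ qf n x = r ^ 2 := by
    intro x
    constructor
    · intro hx
      have h1 : Real.sqrt (qf n x) = r := hx
      rw [← h1, Real.sq_sqrt (qf_nonneg x)]
    · intro hx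
      show Real.sqrt (qf n x) = r
      rw [hx, Real.sqrt_sq hrpos.le]
  have hsphΩ : eucSphere n r ⊆ Ω := by
    intro x hx
    apply hsub
    rw [(hsphere_q x).1 hx]
    linarith only [hr2lt]
  have hsphsΩ : eucSphere n r ⊆ sΩ := by
    intro x hx
    refine ⟨hsphΩ hx, ?_⟩
    have h1 := (hsphere_q x).1 hx
    intro h2
    simp only [Set.mem_singleton_iff] at h2
    rw [h2] at h1
    have h4 : qf n (0 : Fin n → ℝ) = 0 := by simp [qf]
    rw [h4] at h1
    linarith only [h1, hr2pos]
  refine ⟨r, hrpos, hrε, hsphΩ, ?_⟩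
  set m := sInf (w '' eucSphere n r) with hm
  rcases le_or_gt m 0 with hm0 | hm0
  · calc r ^ (n - 2) * m ≤ 0 := mul_nonpos_of_nonneg_of_nonpos (by positivity) hm0
      _ ≤ max 0 (w y0 / K) := le_max_left _ _
  -- main case : m > 0
  set f : (Fin n → ℝ) → ℝ := fun y => qf n y ^ p with hf
  set b : ℝ := (r0 ^ 2) ^ p with hb
  have hbpos : 0 < b := Real.rpow_pos_of_pos (by positivity) p
  set d : ℝ := (r ^ 2) ^ p - b with hd
  have hdpos : 0 < d := by
    have h5 := Real.rpow_lt_rpow_of_neg hr2pos hr2lt hplt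
    rw [hd]; linarith only [h5]
  set a : ℝ := m / d with ha
  have hapos : 0 < a := div_pos hm0 hdpos
  set S : Set (Fin n → ℝ) := {x | r ^ 2 ≤ qf n x ∧ qf n x ≤ r0 ^ 2} with hS
  set U : Set (Fin n → ℝ) := {x | r ^ 2 < qf n x ∧ qf n x < r0 ^ 2} with hUdef
  have hUopen : IsOpen U :=
    (isOpen_lt continuous_const continuous_qf).inter (isOpen_lt continuous_qf continuous_const)
  have hUS : U ⊆ S := fun x hx => ⟨hx.1.le, hx.2.le⟩
  have hSsΩ : S ⊆ sΩ := by
    intro x hx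
    obtain ⟨hx1, hx2⟩ := hx
    refine ⟨hsub x hx2, ?_⟩
    intro h2
    simp only [Set.mem_singleton_iff] at h2
    have h3 : qf n (0 : Fin n → ℝ) = 0 := by simp [qf]
    rw [h2, h3] at hx1
    linarith only [hx1, hr2pos]
  have hSne0 : ∀ x ∈ S, x ≠ 0 := by
    intro x hx h
    exact (hSsΩ hx).2 (by simp [h])
  have hScompact : IsCompact S := by
    apply Metric.isCompact_of_isClosed_isBounded
    · have hSeq : S = qf n ⁻¹' (Set.Icc (r ^ 2) (r0 ^ 2)) := rfl
      rw [hSeq]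
      exact isClosed_Icc.preimage continuous_qf
    · apply (Metric.isBounded_closedBall (x := (0 : Fin n → ℝ)) (r := r0)).subset
      intro x hx
      rw [Metric.mem_closedBall, dist_zero_right]
      have h1 : ‖x‖ ≤ Real.sqrt (qf n x) := by
        rw [pi_norm_le_iff_of_nonneg (Real.sqrt_nonneg _)]
        intro i
        rw [Real.norm_eq_abs, ← Real.sqrt_sq_eq_abs]
        exact Real.sqrt_le_sqrt
          (Finset.single_le_sum (f := fun j => x j ^ 2) (fun j _ => sq_nonneg _) (Finset.mem_univ i))
      calc ‖x‖ ≤ Real.sqrt (qf n x) := h1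
        _ ≤ Real.sqrt (r0 ^ 2) := Real.sqrt_le_sqrt hx.2
        _ = r0 := Real.sqrt_sq hr0.le
  set u : (Fin n → ℝ) → ℝ := fun y => w y - a * (f y - b) with hu
  have hwca : ∀ y ∈ U, ContDiffAt ℝ 2 w y :=
    fun y hy => hw.contDiffAt (hsΩopen.mem_nhds (hSsΩ (hUS hy)))
  have hgca : ∀ y ∈ U, ContDiffAt ℝ 2 (fun z => f z - b) y :=
    fun y hy => (contDiffAt_rpow_qf p (hSne0 y (hUS hy))).sub contDiffAt_const
  have hu2 : ∀ x ∈ U, ContDiffAt ℝ 2 u x := by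
    intro x hx
    exact (hwca x hx).sub (contDiffAt_const.mul (hgca x hx))
  have hucont : ContinuousOn u S := by
    have hws : ContinuousOn w S := hw.continuousOn.mono hSsΩ
    have hfs : ContinuousOn f S := fun x hx =>
      ((contDiffAt_rpow_qf p (hSne0 x hx)).continuousAt).continuousWithinAt
    exact hws.sub (continuousOn_const.mul (hfs.sub continuousOn_const))
  have hlapu : ∀ x ∈ U, lap n u x ≤ 0 := by
    intro x hx
    have hx0 := hSne0 x (hUS hx)
    have h1 : lap n u x = lap n w x - a * lap n (fun y => f y - b) x :=
      lap_sub_const_mul hUopen hx hwca hgca a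
    have h2 : lap n (fun y => f y - b) x = lap n f x := by
      have h := lap_add_const (n := n) f (-b) x
      have he : (fun y => f y + (-b)) = fun y => f y - b := by funext y; ring
      rw [he] at h
      exact h
    have h3 : lap n f x = 0 := by
      rw [hf]
      rw [lap_rpow_qf p hx0]
      have hz : 2 * (n:ℝ) * p + 4 * p * (p - 1) = 0 := by rw [hp]; ring
      rw [hz, zero_mul]
    rw [h1, h2, h3, mul_zero, sub_zero]
    exact hsuper x (hSsΩ (hUS hx))
  have hbdd : BddBelow (w '' eucSphere n r) := by
    refine ⟨0, ?_⟩
    rintro z ⟨y, hy, rfl⟩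
    exact hwnonneg y (hsphsΩ hy)
  have hbdry : ∀ x ∈ S \ U, 0 ≤ u x := by
    intro x hx
    obtain ⟨⟨h1, h2⟩, h3⟩ := hx
    have hwx : 0 ≤ w x := hwnonneg x (hSsΩ ⟨h1, h2⟩)
    rcases eq_or_lt_of_le h1 with he | hlt1
    · -- inner sphere
      have hxs : x ∈ eucSphere n r := (hsphere_q x).2 he.symm
      have hmle : m ≤ w x := csInf_le hbdd ⟨x, hxs, rfl⟩
      have hfx : f x = (r ^ 2) ^ p := by rw [hf]; simp only []; rw [← he]
      have hadm : a * (f x - b) = m := by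
        rw [hfx]
        show a * d = m
        rw [ha]
        exact div_mul_cancel₀ m hdpos.ne'
      show 0 ≤ w x - a * (f x - b)
      rw [hadm]
      linarith only [hmle, hwx]
    · rcases eq_or_lt_of_le h2 with he2 | hlt2
      · have hfx : f x = b := by rw [hf]; simp only []; rw [he2]
        show 0 ≤ w x - a * (f x - b)
        rw [hfx]
        simpa using hwx
      · exact absurd ⟨hlt1, hlt2⟩ h3
  have humin := weak_min (by omega : 0 < n) hScompact hUopen hUS hucont hu2 hlapu hbdry
  have hy0S : y0 ∈ S := ⟨hy0lb, hy0ub⟩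
  have huy0 : 0 ≤ w y0 - a * (f y0 - b) := humin y0 hy0S
  have hfy0 : f y0 = ((r0 / 2) ^ 2) ^ p := by rw [hf]; simp only []; rw [hqy0]
  have haK : a * K ≤ w y0 := by
    have hKe : f y0 - b = K := by rw [hfy0, hK, hb]
    rw [hKe] at huy0
    linarith only [huy0]
  have haC : a ≤ w y0 / K := (le_div_iff₀ hKpos).2 haK
  -- key identity r^(n-2) * (r^2)^p = 1
  have hkey : (r:ℝ) ^ (n - 2) * (r ^ 2) ^ p = 1 := by
    have h1 : (r:ℝ) ^ (n - 2) = r ^ (((n:ℝ) - 2)) := by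
      rw [← Real.rpow_natCast r (n - 2), Nat.cast_sub (by omega)]
      norm_num
    have h2 : ((r:ℝ) ^ 2) ^ p = r ^ (2 * p) := by
      rw [← Real.rpow_natCast r 2, ← Real.rpow_mul hrpos.le]
      norm_num
    rw [h1, h2, ← Real.rpow_add hrpos]
    have h3 : ((n:ℝ) - 2) + 2 * p = 0 := by rw [hp]; ring
    rw [h3, Real.rpow_zero]
  have hmad : m = a * d := (div_mul_cancel₀ m hdpos.ne').symm
  have hstep : r ^ (n - 2) * m ≤ a := by
    calc r ^ (n - 2) * m = a * (r ^ (n - 2) * d) := by rw [hmad]; ring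
      _ ≤ a * (r ^ (n - 2) * (r ^ 2) ^ p) := by
          apply mul_le_mul_of_nonneg_left _ hapos.le
          apply mul_le_mul_of_nonneg_left _ (by positivity)
          rw [hd]; linarith only [hbpos]
      _ = a := by rw [hkey, mul_one]
  calc r ^ (n - 2) * m ≤ a := hstep
    _ ≤ w y0 / K := haC
    _ ≤ max 0 (w y0 / K) := le_max_right _ _
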